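/- Cycle pumping preserves paths: let π = p ++ c ++ s be a list of arcs forming a path, where c is nonempty and tgt (c.getLast) = src (c.head) (i.e., c is a cycle). Then for every natural number m ≥ 1, the list p ++ c^m ++ s is also a path, and it has the same first arc and the same last arc as π. -/

import Mathlib

/-- Cycle pumping preserves paths: if `π = p ++ c ++ s` is a path and `c` is a
nonempty cycle (the target of its last arc is the source of its first arc), then
for every `m ≥ 1`, `p ++ c^m ++ s` is also a path with the same first and last arcs. -/
theorem cycle_pumping {S N : Type*} (p c s : List (N × S × N))
    (hc : c ≠ [])
    (hcycle : (c.getLast hc).2.2 = (c.head hc).1)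
    (hpath : List.Chain' (fun a b => a.2.2 = b.1) (p ++ c ++ s))
    (m : ℕ) (hm : 1 ≤ m) :
    List.Chain' (fun a b => a.2.2 = b.1) (p ++ (List.replicate m c).flatten ++ s) ∧
    (p ++ (List.replicate m c).flatten ++ s).head? = (p ++ c ++ s).head? ∧
    (p ++ (List.replicate m c).flatten ++ s).getLast? = (p ++ c ++ s).getLast? := by
  obtain ⟨k, rfl⟩ : ∃ k, m = k + 1 := ⟨m - 1, (Nat.succ_pred_eq_of_pos hm).symm⟩
  clear hm
  -- head of the pumped cycle
  have hhead : ∀ k : ℕ, ((List.replicate (k + 1) c).flatten).head? = c.head? := by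
    intro k
    rw [List.replicate_succ, List.flatten_cons, List.head?_append,
      List.head?_eq_head hc]
    rfl
  -- last of the pumped cycle
  have hlast : ∀ k : ℕ, ((List.replicate (k + 1) c).flatten).getLast? = c.getLast? := by
    intro k
    rw [List.replicate_succ', List.flatten_append, List.getLast?_append]
    simp [List.getLast?_eq_getLast hc]
  -- chain property
  have hchain : ∀ k : ℕ,
      List.Chain' (fun a b : N × S × N => a.2.2 = b.1)
        (p ++ (List.replicate (k + 1) c).flatten ++ s) := by
    intro k
    induction k with
    | zero => simpa using hpath
    | succ n ih =>
        rw [List.replicate_succ, List.flatten_cons]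
        have : p ++ (c ++ (List.replicate (n + 1) c).flatten) ++ s
            = (p ++ c) ++ ((List.replicate (n + 1) c).flatten ++ s) := by
          simp
        rw [this]; show List.IsChain _ _; rw [List.isChain_append]
        refine ⟨hpath.prefix ⟨s, by simp⟩, ?_, ?_⟩
        · have := ih
          rw [show p ++ (List.replicate (n + 1) c).flatten ++ s
              = p ++ ((List.replicate (n + 1) c).flatten ++ s) by simp] at this
          exact this.suffix ⟨p, rfl⟩
        · intro x hx y hy
          rw [List.getLast?_append, List.getLast?_eq_getLast hc] at hx
          rw [List.head?_append, hhead n, List.head?_eq_head hc] at hy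
          simp only [Option.or, Option.mem_def, Option.some.injEq] at hx hy
          subst hx; subst hy
          exact hcycle
  refine ⟨hchain k, ?_, ?_⟩
  · simp [List.head?_append, hhead k]
  · simp [List.getLast?_append, hlast k]
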